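/- Let G be a finite simple graph admitting a barbell partition and let v be a vertex of G. Then the graph dup(G, v), obtained from G by adding a new vertex u adjacent exactly to the neighbors of v, admits a barbell partition. -/

import Mathlib

open SimpleGraph

/-- A barbell partition of a graph `G`: a partition of the vertex set into
`R`, `W1`, `W2` with `W1, W2` nonempty, no edges between `W1` and `W2`, and
every vertex of `R` has a number of neighbors in each `Wi` different from 1. -/
def IsBarbellPartition {V : Type*} (G : SimpleGraph V) (R W1 W2 : Set V) : Prop :=
  R ∪ W1 ∪ W2 = Set.univ ∧ Disjoint R W1 ∧ Disjoint R W2 ∧ Disjoint W1 W2 ∧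
  W1.Nonempty ∧ W2.Nonempty ∧
  (∀ w1 ∈ W1, ∀ w2 ∈ W2, ¬ G.Adj w1 w2) ∧
  (∀ v ∈ R, (G.neighborSet v ∩ W1).ncard ≠ 1 ∧ (G.neighborSet v ∩ W2).ncard ≠ 1)

/-- `G` admits a barbell partition. -/
def HasBarbellPartition {V : Type*} (G : SimpleGraph V) : Prop :=
  ∃ R W1 W2 : Set V, IsBarbellPartition G R W1 W2

/-- A fort of `G`: a nonempty vertex set `F` such that no vertex outside `F`
has exactly one neighbor in `F`. -/
def IsFort {V : Type*} (G : SimpleGraph V) (F : Set V) : Prop :=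
  F.Nonempty ∧ ∀ v ∉ F, (G.neighborSet v ∩ F).ncard ≠ 1

/-- `dup G v`: duplicate the vertex `v` of `G` without an edge; the new vertex
`none` is adjacent exactly to the neighbors of `v`. -/
def dup {V : Type*} (G : SimpleGraph V) (v : V) : SimpleGraph (Option V) where
  Adj x y :=
    match x, y with
    | some a, some b => G.Adj a b
    | some a, none => G.Adj v a
    | none, some a => G.Adj v a
    | none, none => False
  symm := ⟨by
    rintro (_ | a) (_ | b) h
    · exact h
    · exact h
    · exact h
    · exact h.symm⟩
  loopless := ⟨by
    rintro (_ | a) h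
    · exact h
    · exact G.irrefl h⟩

/-- `jdup G v`: duplicate the vertex `v` of `G` with an edge; the new vertex
`none` is adjacent to `v` and to all neighbors of `v`. -/
def jdup {V : Type*} (G : SimpleGraph V) (v : V) : SimpleGraph (Option V) where
  Adj x y :=
    match x, y with
    | some a, some b => G.Adj a b
    | some a, none => G.Adj v a ∨ a = v
    | none, some a => G.Adj v a ∨ a = v
    | none, none => False
  symm := ⟨by
    rintro (_ | a) (_ | b) h
    · exact h
    · exact h
    · exact h
    · exact h.symm⟩
  loopless := ⟨by
    rintro (_ | a) h
    · exact h
    · exact G.irrefl h⟩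

lemma barbell_symm {V : Type*} {G : SimpleGraph V} {R W1 W2 : Set V}
    (h : IsBarbellPartition G R W1 W2) : IsBarbellPartition G R W2 W1 := by
  obtain ⟨hu, h1, h2, h12, hn1, hn2, ha, hd⟩ := h
  refine ⟨?_, h2, h1, h12.symm, hn2, hn1, fun a ha2 b hb1 hab => ha b hb1 a ha2 hab.symm,
    fun r hr => ⟨(hd r hr).2, (hd r hr).1⟩⟩
  rw [← hu]; ext x; simp; tauto

lemma dup_key1 {V : Type*} (G : SimpleGraph V) (v r : V) (W : Set V) :
    (dup G v).neighborSet (some r) ∩ (some '' W) = some '' (G.neighborSet r ∩ W) := by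
  ext x
  cases x with
  | none => simp [dup, SimpleGraph.neighborSet]
  | some a => simp [dup, SimpleGraph.neighborSet]

lemma dup_key2 {V : Type*} (G : SimpleGraph V) (v : V) (W : Set V) :
    (dup G v).neighborSet none ∩ (some '' W) = some '' (G.neighborSet v ∩ W) := by
  ext x
  cases x with
  | none => simp [dup, SimpleGraph.neighborSet]
  | some a => simp [dup, SimpleGraph.neighborSet]

lemma dup_card1 {V : Type*} (G : SimpleGraph V) (v r : V) (W : Set V) :
    ((dup G v).neighborSet (some r) ∩ (some '' W)).ncard = (G.neighborSet r ∩ W).ncard := by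
  rw [dup_key1, Set.ncard_image_of_injective _ (Option.some_injective V)]

lemma barbell_union_aux {V : Type*} {R W1 W2 : Set V} (hu : R ∪ W1 ∪ W2 = Set.univ)
    (a : V) : a ∈ R ∨ a ∈ W1 ∨ a ∈ W2 := by
  have : a ∈ R ∪ W1 ∪ W2 := hu ▸ Set.mem_univ a
  simpa [or_assoc] using this

lemma disj_insert_none_right {V : Type*} {A B : Set V} (h : Disjoint A B) :
    Disjoint (some '' A : Set (Option V)) (insert none (some '' B)) := by
  rw [Set.disjoint_right]
  rintro x (rfl | ⟨b, hb, rfl⟩)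
  · simp
  · rintro ⟨a, ha, hab⟩
    cases Option.some_injective V hab
    exact Set.disjoint_left.1 h ha hb

/-- Case `v ∈ W1`. -/
lemma dup_aux_mem {V : Type*} [Fintype V] (G : SimpleGraph V) (v : V) (R W1 W2 : Set V)
    (hp : IsBarbellPartition G R W1 W2) (hv : v ∈ W1) :
    IsBarbellPartition (dup G v) (some '' R) (insert none (some '' W1)) (some '' W2) := by
  obtain ⟨hu, h1, h2, h12, hn1, hn2, ha, hd⟩ := hp
  have hinj := Option.some_injective V
  refine ⟨?_, ?_, ?_, ?_, ⟨none, Set.mem_insert _ _⟩, hn2.image _, ?_, ?_⟩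
  · ext x
    cases x with
    | none => simp
    | some a => have := barbell_union_aux hu a; simp; tauto
  · exact disj_insert_none_right h1
  · exact (Set.disjoint_image_iff hinj).2 h2
  · exact (disj_insert_none_right h12.symm).symm
  · rintro x hx _ ⟨w2, hw2, rfl⟩
    rcases hx with rfl | ⟨w1, hw1, rfl⟩
    · exact fun hadj => ha v hv w2 hw2 hadj
    · exact fun hadj => ha w1 hw1 w2 hw2 hadj
  · rintro _ ⟨r, hr, rfl⟩
    refine ⟨?_, by rw [dup_card1]; exact (hd r hr).2⟩
    by_cases hadj : G.Adj v r
    · have hset : (dup G v).neighborSet (some r) ∩ insert none (some '' W1)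
          = insert none (some '' (G.neighborSet r ∩ W1)) := by
        ext x
        cases x with
        | none => simp [dup, SimpleGraph.neighborSet, hadj]
        | some a => simp [dup, SimpleGraph.neighborSet]
      rw [hset, Set.ncard_insert_of_notMem (by simp) (Set.toFinite _)]
      have hvmem : v ∈ G.neighborSet r ∩ W1 := ⟨hadj.symm, hv⟩
      have : (G.neighborSet r ∩ W1).ncard ≠ 0 := by
        intro h0
        rw [Set.ncard_eq_zero (Set.toFinite _)] at h0
        exact absurd hvmem (h0 ▸ Set.notMem_empty v)
      have him : (some '' (G.neighborSet r ∩ W1)).ncard = (G.neighborSet r ∩ W1).ncard :=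
        Set.ncard_image_of_injective _ hinj
      omega
    · have hset : (dup G v).neighborSet (some r) ∩ insert none (some '' W1)
          = some '' (G.neighborSet r ∩ W1) := by
        ext x
        cases x with
        | none => simp [dup, SimpleGraph.neighborSet, hadj]
        | some a => simp [dup, SimpleGraph.neighborSet]
      rw [hset, Set.ncard_image_of_injective _ hinj]
      exact (hd r hr).1

/-- If `G` admits a barbell partition, then duplicating any vertex (without an
edge) yields a graph admitting a barbell partition. -/
theorem dup_hasBarbellPartition {V : Type*} [Fintype V] (G : SimpleGraph V) (v : V)
    (h : HasBarbellPartition G) : HasBarbellPartition (dup G v) := by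
  obtain ⟨R, W1, W2, hp⟩ := h
  rcases barbell_union_aux hp.1 v with hv | hv | hv
  · -- v ∈ R
    obtain ⟨hu, h1, h2, h12, hn1, hn2, ha, hd⟩ := hp
    have hinj := Option.some_injective V
    refine ⟨insert none (some '' R), some '' W1, some '' W2, ?_, ?_, ?_, ?_,
      hn1.image _, hn2.image _, ?_, ?_⟩
    · ext x
      cases x with
      | none => simp
      | some a => have := barbell_union_aux hu a; simp; tauto
    · exact (disj_insert_none_right h1.symm).symm
    · exact (disj_insert_none_right h2.symm).symm
    · exact (Set.disjoint_image_iff hinj).2 h12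
    · rintro _ ⟨w1, hw1, rfl⟩ _ ⟨w2, hw2, rfl⟩
      exact fun hadj => ha w1 hw1 w2 hw2 hadj
    · rintro x hx
      rcases hx with rfl | ⟨r, hr, rfl⟩
      · rw [dup_key2, dup_key2, Set.ncard_image_of_injective _ hinj,
          Set.ncard_image_of_injective _ hinj]
        exact hd v hv
      · rw [dup_card1, dup_card1]
        exact hd r hr
  · exact ⟨_, _, _, dup_aux_mem G v R W1 W2 hp hv⟩
  · exact ⟨_, _, _, barbell_symm (dup_aux_mem G v R W2 W1 (barbell_symm hp) hv)⟩
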